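/- Let $D := S_\kappa \cap [\ell,u] \subset \mathbb{R}^n$, where $S_\kappa = \{w \in \mathbb{R}^n : \|w\|_0 \le \kappa\}$ and $[\ell,u]$ is a box with $0 \in [\ell_i,u_i]$ for all $i$. Let $w \in \mathbb{R}^n$ and let $y$ be a projection of $w$ onto $D$ (i.e., a minimizer of $\|z - w\|$ over $z \in D$). Then for each index $i$, either $y_i = 0$ or $y_i = P_{[\ell_i,u_i]}(w_i)$. -/

import Mathlib

/-- Projection of a real number onto the interval `[l, u]`. -/
noncomputable def projInt (l u t : ℝ) : ℝ := max l (min t u)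

/-- The number of nonzero components of a vector. -/
noncomputable def zeroNorm {n : ℕ} (w : Fin n → ℝ) : ℕ := Set.ncard {i | w i ≠ 0}

lemma scalar_min (L U W t : ℝ) (hLU : L < U) (ht : L ≤ t ∧ t ≤ U)
    (h : (t - W)^2 ≤ (max L (min W U) - W)^2) : t = max L (min W U) := by
  obtain ⟨h1, h2⟩ := ht
  rcases le_or_gt W L with hWL | hWL
  · have hm : min W U = W := min_eq_left (le_of_lt (lt_of_le_of_lt hWL hLU))
    rw [hm] at h ⊢
    have : max L W = L := max_eq_left hWL
    rw [this] at h ⊢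
    nlinarith
  rcases le_or_gt U W with hUW | hUW
  · have hm : min W U = U := min_eq_right hUW
    rw [hm] at h ⊢
    have : max L U = U := max_eq_right (le_of_lt hLU)
    rw [this] at h ⊢
    nlinarith
  · have hm : min W U = W := min_eq_left (le_of_lt hUW)
    rw [hm] at h ⊢
    have : max L W = W := max_eq_right (le_of_lt hWL)
    rw [this] at h ⊢
    nlinarith

theorem stmt_2 {n : ℕ} (κ : ℕ) (hκ1 : 1 ≤ κ) (hκn : κ ≤ n - 1)
    (l u : Fin n → ℝ) (hlu : ∀ i, l i < u i) (h0 : ∀ i, l i ≤ 0 ∧ 0 ≤ u i)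
    (w y : EuclideanSpace ℝ (Fin n))
    (hyD : zeroNorm y ≤ κ ∧ ∀ i, l i ≤ y i ∧ y i ≤ u i)
    (hymin : ∀ z : EuclideanSpace ℝ (Fin n),
      (zeroNorm z ≤ κ ∧ ∀ i, l i ≤ z i ∧ z i ≤ u i) → ‖y - w‖ ≤ ‖z - w‖) :
    ∀ i, y i = 0 ∨ y i = projInt (l i) (u i) (w i) := by
  intro i
  by_cases hyi : y i = 0
  · exact Or.inl hyi
  right
  set p : ℝ := projInt (l i) (u i) (w i) with hp
  set z : EuclideanSpace ℝ (Fin n) := WithLp.toLp 2 (Function.update y i p) with hz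
  have hzj : ∀ j, j ≠ i → z j = y j := by
    intro j hj; simp [hz, Function.update_of_ne hj]
  have hzi : z i = p := by simp [hz]
  have hpl : l i ≤ p := le_max_left _ _
  have hpu : p ≤ u i := max_le (le_of_lt (hlu i)) (min_le_right _ _)
  have hz1 : zeroNorm z ≤ κ := by
    refine le_trans ?_ hyD.1
    apply Set.ncard_le_ncard _ (Set.toFinite _)
    intro j hj
    by_cases hji : j = i
    · subst hji; exact hyi
    · simp only [Set.mem_setOf_eq] at hj ⊢
      rwa [hzj j hji] at hj
  have hz2 : ∀ j, l j ≤ z j ∧ z j ≤ u j := by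
    intro j
    by_cases hji : j = i
    · subst hji; rw [hzi]; exact ⟨hpl, hpu⟩
    · rw [hzj j hji]; exact hyD.2 j
  have hle := hymin z ⟨hz1, hz2⟩
  have hsum : ∑ j, (y j - w j)^2 ≤ ∑ j, (z j - w j)^2 := by
    have h1 : ‖y - w‖ = Real.sqrt (∑ j, (y j - w j)^2) := by
      rw [EuclideanSpace.norm_eq]
      congr 1
      apply Finset.sum_congr rfl
      intro j _
      simp [sq_abs]
    have h2 : ‖z - w‖ = Real.sqrt (∑ j, (z j - w j)^2) := by
      rw [EuclideanSpace.norm_eq]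
      congr 1
      apply Finset.sum_congr rfl
      intro j _
      simp [sq_abs]
    rw [h1, h2] at hle
    have hA : (0:ℝ) ≤ ∑ j, (y j - w j)^2 :=
      Finset.sum_nonneg fun j _ => sq_nonneg _
    have hB : (0:ℝ) ≤ ∑ j, (z j - w j)^2 :=
      Finset.sum_nonneg fun j _ => sq_nonneg _
    exact (Real.sqrt_le_sqrt_iff hB).mp hle
  have key : (y i - w i)^2 ≤ (p - w i)^2 := by
    have herase : ∑ j ∈ Finset.univ.erase i, (y j - w j)^2
        = ∑ j ∈ Finset.univ.erase i, (z j - w j)^2 := by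
      apply Finset.sum_congr rfl
      intro j hj
      rw [hzj j (Finset.ne_of_mem_erase hj)]
    have e1 : ∑ j ∈ Finset.univ.erase i, (y j - w j)^2 + (y i - w i)^2
        = ∑ j, (y j - w j)^2 := Finset.sum_erase_add _ _ (Finset.mem_univ i)
    have e2 : ∑ j ∈ Finset.univ.erase i, (z j - w j)^2 + (z i - w i)^2
        = ∑ j, (z j - w j)^2 := Finset.sum_erase_add _ _ (Finset.mem_univ i)
    rw [hzi] at e2
    linarith [hsum, herase, e1, e2]
  exact scalar_min (l i) (u i) (w i) (y i) (hlu i) (hyD.2 i) key
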